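/- The twisted baker map F preserves the normalized Lebesgue measure m on X = [−1,1] × [0,1]^{M−1}; that is, m(F^{-1}(A)) = m(A) for every Borel set A ⊆ X. -/
import Mathlib


open MeasureTheory

section BakerAux

lemma bakerAux_vol_scale (M : ℕ) [NeZero M] (a : ℝ) (ha : a ≠ 0) (s : Set (Fin M → ℝ)) :
    volume ((fun x : Fin M → ℝ => fun i => if i = 0 then a * x i else x i) ⁻¹' s)
      = ENNReal.ofReal |a⁻¹| * volume s := by
  have hfun : (fun x : Fin M → ℝ => fun i => if i = 0 then a * x i else x i)
      = ⇑(Matrix.toLin' (Matrix.diagonal (fun i : Fin M => if i = 0 then a else 1))) := by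
    funext x; ext i
    simp [Matrix.toLin'_apply, Matrix.mulVec_diagonal, ite_mul]
  have hdet : LinearMap.det (Matrix.toLin'
      (Matrix.diagonal (fun i : Fin M => if i = 0 then a else 1))) = a := by
    rw [LinearMap.det_toLin', Matrix.det_diagonal]
    rw [Finset.prod_ite_eq' Finset.univ (0 : Fin M) (fun _ => a)]
    simp
  rw [hfun, Measure.addHaar_preimage_linearMap volume (by rw [hdet]; exact ha), hdet]

lemma bakerAux_vol_perm (M : ℕ) [NeZero M] (s : Set (Fin M → ℝ)) :
    volume ((fun (x : Fin M → ℝ) => fun i => x (i - 1)) ⁻¹' s) = volume s := by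
  have h := volume_measurePreserving_piCongrLeft (fun _ : Fin M => ℝ) (Equiv.addRight (1 : Fin M))
  have hfun : ⇑(MeasurableEquiv.piCongrLeft (fun _ : Fin M => ℝ) (Equiv.addRight (1 : Fin M)))
      = fun (x : Fin M → ℝ) => fun i => x (i - 1) := by
    funext x; ext i
    simp [MeasurableEquiv.piCongrLeft, Equiv.piCongrLeft, sub_eq_add_neg]
  rw [← hfun]
  exact h.measure_preimage_emb (MeasurableEquiv.measurableEmbedding _) s

lemma bakerAux_vol_hyperplane (M : ℕ) [NeZero M] :
    volume {x : Fin M → ℝ | x 0 = 0} = 0 := by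
  have hsub : {x : Fin M → ℝ | x 0 = 0}
      ⊆ Set.pi Set.univ (fun i : Fin M => if i = 0 then ({0} : Set ℝ) else Set.univ) := by
    intro x hx i _
    by_cases h : i = 0 <;> simp [h]
    exact hx
  refine measure_mono_null hsub ?_
  rw [volume_pi_pi]
  refine Finset.prod_eq_zero (Finset.mem_univ (0 : Fin M)) ?_
  simp

/-- The left branch of the baker map halves measure of preimages. -/
lemma bakerAux_volL (M : ℕ) [NeZero M] (A : Set (Fin M → ℝ)) :
    volume ((fun x : Fin M → ℝ => fun i => if i = 0 then 1 + 2 * x 0 else x i) ⁻¹' A)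
      = ENNReal.ofReal 2⁻¹ * volume A := by
  have hfun : (fun x : Fin M → ℝ => fun i => if i = 0 then 1 + 2 * x 0 else x i)
      = (fun y : Fin M → ℝ => y + fun i => if i = 0 then (1:ℝ) else 0)
        ∘ (fun x : Fin M → ℝ => fun i => if i = 0 then 2 * x i else x i) := by
    funext x; ext i
    by_cases h : i = 0 <;> simp [h] <;> ring
  rw [hfun, Set.preimage_comp, bakerAux_vol_scale M 2 two_ne_zero,
    measure_preimage_add_right volume _ A]
  norm_num [abs_of_nonneg]

/-- The right branch of the baker map halves measure of preimages. -/
lemma bakerAux_volR (M : ℕ) [NeZero M] (A : Set (Fin M → ℝ)) :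
    volume ((fun x : Fin M → ℝ => fun i => if i = 0 then 1 - 2 * x (i - 1) else x (i - 1)) ⁻¹' A)
      = ENNReal.ofReal 2⁻¹ * volume A := by
  have hfun : (fun x : Fin M → ℝ => fun i => if i = 0 then 1 - 2 * x (i - 1) else x (i - 1))
      = ((fun y : Fin M → ℝ => y + fun i => if i = 0 then (1:ℝ) else 0)
          ∘ (fun x : Fin M → ℝ => fun i => if i = 0 then (-2) * x i else x i))
        ∘ (fun x : Fin M → ℝ => fun i => x (i - 1)) := by
    funext x; ext i
    by_cases h : i = 0 <;> simp [h] <;> ring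
  rw [hfun, Set.preimage_comp, Set.preimage_comp, bakerAux_vol_perm,
    bakerAux_vol_scale M (-2) (by norm_num), measure_preimage_add_right volume _ A]
  norm_num [abs_of_nonneg]

end BakerAux

/-- The twisted baker map on `[-1,1] × [0,1]^{M-1}` (coordinates indexed by `Fin M`). -/
noncomputable def twistedBaker (M : ℕ) [NeZero M] (x : Fin M → ℝ) : Fin M → ℝ :=
  if x 0 < 0 then fun i => if i = 0 then 1 + 2 * x 0 else x i
  else fun i => if i = 0 then 1 - 2 * x (i - 1) else x (i - 1)

/-- The phase space `X = [-1,1] × [0,1]^{M-1}`. -/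
def bakerSpace (M : ℕ) [NeZero M] : Set (Fin M → ℝ) :=
  {x | x 0 ∈ Set.Icc (-1 : ℝ) 1 ∧ ∀ i : Fin M, i ≠ 0 → x i ∈ Set.Icc (0 : ℝ) 1}

/-- The left half `X_L = {x ∈ X : x₁ < 0}`. -/
def bakerL (M : ℕ) [NeZero M] : Set (Fin M → ℝ) := {x ∈ bakerSpace M | x 0 < 0}

/-- The right half `X_R = {x ∈ X : x₁ ≥ 0}`. -/
def bakerR (M : ℕ) [NeZero M] : Set (Fin M → ℝ) := {x ∈ bakerSpace M | 0 ≤ x 0}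

/-- Normalized Lebesgue measure on `X`. -/
noncomputable def bakerMeasure (M : ℕ) [NeZero M] : Measure (Fin M → ℝ) :=
  (volume (bakerSpace M))⁻¹ • volume.restrict (bakerSpace M)

/-- The twisted baker map preserves the normalized Lebesgue measure on `X`. -/
theorem twistedBaker_measurePreserving (M : ℕ) [NeZero M] (hM : 2 ≤ M)
    (A : Set (Fin M → ℝ)) (hA : A ⊆ bakerSpace M) (hAmeas : MeasurableSet A) :
    bakerMeasure M (twistedBaker M ⁻¹' A) = bakerMeasure M A := by
  classical
  set L : (Fin M → ℝ) → (Fin M → ℝ) :=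
    fun x => fun i => if i = 0 then 1 + 2 * x 0 else x i with hLdef
  set R : (Fin M → ℝ) → (Fin M → ℝ) :=
    fun x => fun i => if i = 0 then 1 - 2 * x (i - 1) else x (i - 1) with hRdef
  have hXmeas : MeasurableSet (bakerSpace M) := by
    have : bakerSpace M = ((fun x : Fin M → ℝ => x 0) ⁻¹' Set.Icc (-1 : ℝ) 1) ∩
        ⋂ (i : Fin M) (_ : i ≠ 0), (fun x : Fin M → ℝ => x i) ⁻¹' Set.Icc (0 : ℝ) 1 := by
      ext x; simp [bakerSpace]
    rw [this]
    exact ((measurable_pi_apply 0) measurableSet_Icc).inter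
      (MeasurableSet.iInter fun i => MeasurableSet.iInter fun _ =>
        (measurable_pi_apply i) measurableSet_Icc)
  have hLmeas : Measurable L := by
    apply measurable_pi_lambda
    intro i
    by_cases h : i = 0 <;> simp only [hLdef, h, if_pos, if_neg, reduceIte]
    · exact (measurable_const.add ((measurable_pi_apply 0).const_mul 2))
    · exact measurable_pi_apply i
  have hRmeas : Measurable R := by
    apply measurable_pi_lambda
    intro i
    by_cases h : i = 0 <;> simp only [hRdef, h, if_pos, if_neg, reduceIte]
    · exact (measurable_const.sub ((measurable_pi_apply _).const_mul 2))
    · exact measurable_pi_apply _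
  -- membership facts
  have hLX : ∀ x : Fin M → ℝ, L x ∈ bakerSpace M → x ∈ bakerSpace M ∧ x 0 ≤ 0 := by
    intro x ⟨h0, hi⟩
    have h0' : (1 : ℝ) + 2 * x 0 ∈ Set.Icc (-1 : ℝ) 1 := by simpa [hLdef] using h0
    obtain ⟨ha, hb⟩ := h0'
    have hx0 : x 0 ∈ Set.Icc (-1 : ℝ) 1 := ⟨by linarith, by linarith⟩
    refine ⟨⟨hx0, fun i hne => ?_⟩, by linarith⟩
    have := hi i hne
    simpa [hLdef, hne] using this
  have hRX : ∀ x : Fin M → ℝ, R x ∈ bakerSpace M → x ∈ bakerSpace M ∧ 0 ≤ x 0 := by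
    intro x ⟨h0, hi⟩
    have hall : ∀ j : Fin M, x j ∈ Set.Icc (0 : ℝ) 1 := by
      intro j
      by_cases hj : j + 1 = 0
      · have hjeq : j = 0 - 1 := by
          rw [← hj]; abel
        have h0' : (1 : ℝ) - 2 * x (0 - 1) ∈ Set.Icc (-1 : ℝ) 1 := by
          simpa [hRdef] using h0
        obtain ⟨ha, hb⟩ := h0'
        rw [hjeq]
        exact ⟨by linarith, by linarith⟩
      · have := hi (j + 1) hj
        have heq : (R x) (j + 1) = x j := by
          simp [hRdef, hj]
        rw [heq] at this
        exact this
    have h00 := hall 0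
    refine ⟨⟨⟨by linarith [h00.1], h00.2⟩, fun i _ => hall i⟩, h00.1⟩
  -- behaviour of T on the two halves
  have hTL : ∀ x : Fin M → ℝ, x 0 < 0 → twistedBaker M x = L x := by
    intro x h; rw [twistedBaker, if_pos h]
  have hTR : ∀ x : Fin M → ℝ, ¬ x 0 < 0 → twistedBaker M x = R x := by
    intro x h; rw [twistedBaker, if_neg h]
  -- split the preimage
  have hsplit : twistedBaker M ⁻¹' A ∩ bakerSpace M
      = (L ⁻¹' A ∩ {x | x 0 < 0}) ∪ R ⁻¹' A := by
    ext x
    constructor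
    · rintro ⟨hTA, hX⟩
      by_cases h : x 0 < 0
      · left; exact ⟨by rw [Set.mem_preimage, ← hTL x h]; exact hTA, h⟩
      · right; rw [Set.mem_preimage, ← hTR x h]; exact hTA
    · rintro (⟨hLA, h⟩ | hRA)
      · exact ⟨by rw [Set.mem_preimage, hTL x h]; exact hLA, (hLX x (hA hLA)).1⟩
      · obtain ⟨hX, h0⟩ := hRX x (hA hRA)
        exact ⟨by rw [Set.mem_preimage, hTR x (not_lt.2 h0)]; exact hRA, hX⟩
  have hdisj : Disjoint (L ⁻¹' A ∩ {x : Fin M → ℝ | x 0 < 0}) (R ⁻¹' A) := by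
    rw [Set.disjoint_left]
    rintro x ⟨_, hneg⟩ hRA
    exact absurd (hRX x (hA hRA)).2 (not_le.2 hneg)
  -- a.e. identification of the left piece
  have hLvol : volume (L ⁻¹' A ∩ {x : Fin M → ℝ | x 0 < 0}) = volume (L ⁻¹' A) := by
    refine le_antisymm (measure_mono Set.inter_subset_left) ?_
    have hsub : L ⁻¹' A ⊆ (L ⁻¹' A ∩ {x : Fin M → ℝ | x 0 < 0}) ∪ {x : Fin M → ℝ | x 0 = 0} := by
      intro x hx
      rcases lt_or_eq_of_le ((hLX x (hA hx)).2) with h | h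
      · exact Or.inl ⟨hx, h⟩
      · exact Or.inr h
    calc volume (L ⁻¹' A)
        ≤ volume ((L ⁻¹' A ∩ {x : Fin M → ℝ | x 0 < 0}) ∪ {x : Fin M → ℝ | x 0 = 0}) :=
          measure_mono hsub
      _ ≤ volume (L ⁻¹' A ∩ {x : Fin M → ℝ | x 0 < 0}) + volume {x : Fin M → ℝ | x 0 = 0} :=
          measure_union_le _ _
      _ = volume (L ⁻¹' A ∩ {x : Fin M → ℝ | x 0 < 0}) := by
          rw [bakerAux_vol_hyperplane M, add_zero]
  -- compute the restricted volumes
  have hmain : volume (twistedBaker M ⁻¹' A ∩ bakerSpace M) = volume A := by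
    rw [hsplit, measure_union hdisj (hRmeas hAmeas), hLvol,
      bakerAux_volL M A, bakerAux_volR M A, ← add_mul]
    have h12 : ENNReal.ofReal 2⁻¹ + ENNReal.ofReal 2⁻¹ = 1 := by
      rw [← ENNReal.ofReal_add (by norm_num) (by norm_num)]
      norm_num
    rw [h12, one_mul]
  -- conclude
  rw [bakerMeasure, Measure.smul_apply, Measure.smul_apply, smul_eq_mul, smul_eq_mul,
    Measure.restrict_apply' hXmeas, Measure.restrict_apply' hXmeas, hmain,
    Set.inter_eq_self_of_subset_left hA]
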